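/- (Lemma 1) Let V : [0,1] → ℝ be convex and bounded, and suppose that for every b ∈ [0,1] the function x ↦ V(Γ_x(b)) W_b(x) is μ-integrable. Then the function f(b) = λ b − (λ − c) + β ∫_X V(Γ_x(b)) W_b(x) dμ(x) − β V(1−p) is convex on [0,1]. -/

import Mathlib

open MeasureTheory

/-- Unnormalized observation probability `W_b(x) = Q1(x) b + Q0(x)(1-b)`. -/
noncomputable def Wf {X : Type*} (Q0 Q1 : X → ℝ) (b : ℝ) (x : X) : ℝ :=
  Q1 x * b + Q0 x * (1 - b)

/-- Do-nothing belief update `Γ_x(b) = (1-p) Q1(x) b / W_b(x)`; since in `ℝ`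
division by zero yields `0`, this automatically satisfies the convention
`Γ_x(b) = 0` when `W_b(x) = 0`. -/
noncomputable def Gf {X : Type*} (p : ℝ) (Q0 Q1 : X → ℝ) (x : X) (b : ℝ) : ℝ :=
  (1 - p) * Q1 x * b / Wf Q0 Q1 b x

/-- **Lemma 1.** Let `V : [0,1] → ℝ` be convex and bounded, with
`x ↦ V(Γ_x(b)) W_b(x)` μ-integrable for every `b ∈ [0,1]`.  Then
`f(b) = λ b − (λ − c) + β ∫ V(Γ_x(b)) W_b(x) dμ(x) − β V(1−p)`
is convex on `[0,1]`. -/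
lemma key (p : ℝ) (hp : p ∈ Set.Icc (0:ℝ) 1) (q0 q1 : ℝ) (h0 : 0 ≤ q0) (h1 : 0 ≤ q1)
    (V : ℝ → ℝ) (hV : ConvexOn ℝ (Set.Icc (0:ℝ) 1) V)
    (b1 b2 s t : ℝ) (hb1 : b1 ∈ Set.Icc (0:ℝ) 1) (hb2 : b2 ∈ Set.Icc (0:ℝ) 1)
    (hs : 0 ≤ s) (ht : 0 ≤ t) (hst : s + t = 1) :
    V ((1-p)*q1*(s*b1+t*b2) / (q1*(s*b1+t*b2) + q0*(1-(s*b1+t*b2)))) *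
      (q1*(s*b1+t*b2) + q0*(1-(s*b1+t*b2)))
    ≤ s * (V ((1-p)*q1*b1 / (q1*b1 + q0*(1-b1))) * (q1*b1 + q0*(1-b1)))
      + t * (V ((1-p)*q1*b2 / (q1*b2 + q0*(1-b2))) * (q1*b2 + q0*(1-b2))) := by
  set W : ℝ → ℝ := fun b => q1*b + q0*(1-b) with hW
  set u : ℝ → ℝ := fun b => (1-p)*q1*b with hu
  have hWnn : ∀ b ∈ Set.Icc (0:ℝ) 1, 0 ≤ W b := by
    intro b hb
    have := hb.1; have := hb.2
    have : 0 ≤ q1 * b := mul_nonneg h1 hb.1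
    have : 0 ≤ q0 * (1-b) := mul_nonneg h0 (by linarith [hb.2])
    simp only [hW]; nlinarith [mul_nonneg h1 hb.1]
  have hunn : ∀ b ∈ Set.Icc (0:ℝ) 1, 0 ≤ u b := by
    intro b hb
    exact mul_nonneg (mul_nonneg (by linarith [hp.2]) h1) hb.1
  have huW : ∀ b ∈ Set.Icc (0:ℝ) 1, u b ≤ W b := by
    intro b hb
    have h1b : 0 ≤ q1 * b := mul_nonneg h1 hb.1
    have h0b : 0 ≤ q0 * (1-b) := mul_nonneg h0 (by linarith [hb.2])
    simp only [hu, hW]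
    nlinarith [hp.1, mul_nonneg h1 hb.1]
  have hm : s*b1+t*b2 ∈ Set.Icc (0:ℝ) 1 :=
    (convex_Icc (0:ℝ) 1) hb1 hb2 hs ht hst
  set b := s*b1+t*b2 with hb
  have hWaff : W b = s * W b1 + t * W b2 := by
    simp only [hW, hb]; ring_nf; nlinarith [hst]
  have huaff : u b = s * u b1 + t * u b2 := by simp only [hu, hb]; ring
  -- argument membership
  have hGmem : ∀ c ∈ Set.Icc (0:ℝ) 1, u c / W c ∈ Set.Icc (0:ℝ) 1 := by
    intro c hc
    rcases eq_or_lt_of_le (hWnn c hc) with h | h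
    · simp [← h]
    · exact ⟨div_nonneg (hunn c hc) h.le, (div_le_one h).mpr (huW c hc)⟩
  have hWzero_u : ∀ c ∈ Set.Icc (0:ℝ) 1, W c = 0 → u c = 0 := by
    intro c hc h
    exact le_antisymm (h ▸ huW c hc) (hunn c hc)
  rcases eq_or_lt_of_le (hWnn b hm) with hW0 | hWpos
  · -- W b = 0
    have h1' : s * W b1 = 0 := by
      have := mul_nonneg hs (hWnn b1 hb1)
      have := mul_nonneg ht (hWnn b2 hb2)
      linarith [hWaff, hW0.symm]
    have h2' : t * W b2 = 0 := by
      have := mul_nonneg hs (hWnn b1 hb1)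
      have := mul_nonneg ht (hWnn b2 hb2)
      linarith [hWaff, hW0.symm]
    have : W b = 0 := hW0.symm
    calc V (u b / W b) * W b = 0 := by rw [this]; ring
      _ ≤ _ := by
          have e1 : s * (V (u b1 / W b1) * W b1) = V (u b1 / W b1) * (s * W b1) := by ring
          have e2 : t * (V (u b2 / W b2) * W b2) = V (u b2 / W b2) * (t * W b2) := by ring
          rw [e1, e2, h1', h2']; simp
  · -- W b > 0
    set l1 := s * W b1 / W b with hl1
    set l2 := t * W b2 / W b with hl2
    have hl1nn : 0 ≤ l1 := div_nonneg (mul_nonneg hs (hWnn b1 hb1)) hWpos.le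
    have hl2nn : 0 ≤ l2 := div_nonneg (mul_nonneg ht (hWnn b2 hb2)) hWpos.le
    have hlsum : l1 + l2 = 1 := by
      rw [hl1, hl2, ← add_div, ← hWaff, div_self hWpos.ne']
    have hc1 := hGmem b1 hb1
    have hc2 := hGmem b2 hb2
    have harg : u b / W b = l1 * (u b1 / W b1) + l2 * (u b2 / W b2) := by
      have e1 : l1 * (u b1 / W b1) = s * u b1 / W b := by
        rcases eq_or_lt_of_le (hWnn b1 hb1) with h | h
        · rw [hWzero_u b1 hb1 h.symm, ← h]; simp
        · rw [hl1]; field_simp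
      have e2 : l2 * (u b2 / W b2) = t * u b2 / W b := by
        rcases eq_or_lt_of_le (hWnn b2 hb2) with h | h
        · rw [hWzero_u b2 hb2 h.symm, ← h]; simp
        · rw [hl2]; field_simp
      rw [e1, e2, huaff]; ring
    have hconv := hV.2 hc1 hc2 hl1nn hl2nn hlsum
    simp only [smul_eq_mul] at hconv
    rw [← harg] at hconv
    have := mul_le_mul_of_nonneg_right hconv hWpos.le
    calc V (u b / W b) * W b ≤ (l1 * V (u b1 / W b1) + l2 * V (u b2 / W b2)) * W b := this
      _ = V (u b1 / W b1) * (s * W b1 / W b * W b) + V (u b2 / W b2) * (t * W b2 / W b * W b) := by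
          rw [hl1, hl2]; ring
      _ = s * (V (u b1 / W b1) * W b1) + t * (V (u b2 / W b2) * W b2) := by
          rw [div_mul_cancel₀ _ hWpos.ne', div_mul_cancel₀ _ hWpos.ne']; ring

theorem adr_f_convex
    {X : Type*} [MeasurableSpace X] (μ : Measure X) [SigmaFinite μ]
    (p lam c β : ℝ)
    (hp : p ∈ Set.Icc (0 : ℝ) 1) (hlam : 0 < lam) (hc : 0 < c)
    (hβ : β ∈ Set.Ioo (0 : ℝ) 1)
    (Q0 Q1 : X → ℝ)
    (hQ0meas : Measurable Q0) (hQ1meas : Measurable Q1)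
    (hQ0nn : ∀ x, 0 ≤ Q0 x) (hQ1nn : ∀ x, 0 ≤ Q1 x)
    (hQ0int : ∫ x, Q0 x ∂μ = 1) (hQ1int : ∫ x, Q1 x ∂μ = 1)
    (V : ℝ → ℝ)
    (hVconv : ConvexOn ℝ (Set.Icc (0 : ℝ) 1) V)
    (hVbdd : ∃ C, ∀ b ∈ Set.Icc (0 : ℝ) 1, |V b| ≤ C)
    (hVint : ∀ b ∈ Set.Icc (0 : ℝ) 1,
      Integrable (fun x => V (Gf p Q0 Q1 x b) * Wf Q0 Q1 b x) μ) :
    ConvexOn ℝ (Set.Icc (0 : ℝ) 1)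
      (fun b => lam * b - (lam - c) +
        β * ∫ x, V (Gf p Q0 Q1 x b) * Wf Q0 Q1 b x ∂μ - β * V (1 - p)) := by
  refine ⟨convex_Icc 0 1, fun b1 hb1 b2 hb2 s t hs ht hst => ?_⟩
  simp only [smul_eq_mul]
  have hm : s*b1 + t*b2 ∈ Set.Icc (0:ℝ) 1 := (convex_Icc (0:ℝ) 1) hb1 hb2 hs ht hst
  have hintm := hVint _ hm
  have hint1 := hVint b1 hb1
  have hint2 := hVint b2 hb2
  have hpt : ∀ x, V (Gf p Q0 Q1 x (s*b1+t*b2)) * Wf Q0 Q1 (s*b1+t*b2) x ≤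
      s * (V (Gf p Q0 Q1 x b1) * Wf Q0 Q1 b1 x) + t * (V (Gf p Q0 Q1 x b2) * Wf Q0 Q1 b2 x) := by
    intro x
    have := key p hp (Q0 x) (Q1 x) (hQ0nn x) (hQ1nn x) V hVconv b1 b2 s t hb1 hb2 hs ht hst
    simpa only [Gf, Wf] using this
  have hI : (∫ x, V (Gf p Q0 Q1 x (s*b1+t*b2)) * Wf Q0 Q1 (s*b1+t*b2) x ∂μ) ≤
      s * (∫ x, V (Gf p Q0 Q1 x b1) * Wf Q0 Q1 b1 x ∂μ)
      + t * (∫ x, V (Gf p Q0 Q1 x b2) * Wf Q0 Q1 b2 x ∂μ) := by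
    calc (∫ x, V (Gf p Q0 Q1 x (s*b1+t*b2)) * Wf Q0 Q1 (s*b1+t*b2) x ∂μ)
        ≤ ∫ x, (s * (V (Gf p Q0 Q1 x b1) * Wf Q0 Q1 b1 x)
              + t * (V (Gf p Q0 Q1 x b2) * Wf Q0 Q1 b2 x)) ∂μ :=
          integral_mono hintm ((hint1.const_mul s).add (hint2.const_mul t)) hpt
      _ = _ := by rw [integral_add (hint1.const_mul s) (hint2.const_mul t),
            integral_const_mul, integral_const_mul]
  have hβnn : 0 ≤ β := hβ.1.le
  have h2 := mul_le_mul_of_nonneg_left hI hβnn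
  have ht2 : t = 1 - s := by linarith
  subst ht2
  nlinarith [h2]
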